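/- Fix θ ∈ (−1,0)∪(0,∞). Suppose there exist λ > 0 and v : 𝒳×𝒴 → ℝ with v(x,y) > 0 for all (x,y) such that Σ_{x,y} v(x,y)·W̃_θ((x,y)|(x',y')) = λ·v(x',y') for all (x',y'). Then for every initial distribution P_{X₁Y₁}, lim_{n→∞} (1/n)·H↓_{1+θ}(Xⁿ|Yⁿ) = −(1/θ)·log λ. -/

import Mathlib

open Real Filter

/-- Joint distribution of a Markov chain of length `m+1` with initial distribution `P1`
and transition matrix `W` (where `W p p'` is the probability of moving from `p'` to `p`). -/
noncomputable def chainProb {𝒳 𝒴 : Type*} (W : 𝒳 × 𝒴 → 𝒳 × 𝒴 → ℝ) (P1 : 𝒳 × 𝒴 → ℝ)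
    (m : ℕ) (z : Fin (m + 1) → 𝒳 × 𝒴) : ℝ :=
  P1 (z 0) * ∏ i : Fin m, W (z i.succ) (z i.castSucc)

/-- `H↓_{1+θ}(Xⁿ|Yⁿ)` for the length-`(m+1)` Markov chain. -/
noncomputable def condRenyiDownChain {𝒳 𝒴 : Type*} [Fintype 𝒳] [Fintype 𝒴]
    (W : 𝒳 × 𝒴 → 𝒳 × 𝒴 → ℝ) (P1 : 𝒳 × 𝒴 → ℝ) (θ : ℝ) (m : ℕ) : ℝ :=
  -(1 / θ) * Real.log (∑ z : Fin (m + 1) → 𝒳 × 𝒴,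
    if 0 < chainProb W P1 m z then
      chainProb W P1 m z ^ (1 + θ) *
        (∑ xn : Fin (m + 1) → 𝒳, chainProb W P1 m fun i => (xn i, (z i).2)) ^ (-θ)
    else 0)

/-! ### Auxiliary lemmas -/

lemma chainProb_snoc {𝒳 𝒴 : Type*} (W : 𝒳 × 𝒴 → 𝒳 × 𝒴 → ℝ) (P1 : 𝒳 × 𝒴 → ℝ)
    (m : ℕ) (z : Fin (m + 2) → 𝒳 × 𝒴) :
    chainProb W P1 (m+1) z
      = chainProb W P1 m (fun i => z i.castSucc)
        * W (z (Fin.last (m+1))) (z (Fin.castSucc (Fin.last m))) := by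
  unfold chainProb
  rw [Fin.prod_univ_castSucc]
  simp only [Fin.succ_castSucc, Fin.castSucc_zero, Fin.succ_last]
  ring

lemma marginal_fact {𝒳 𝒴 : Type*} [Fintype 𝒳] (W : 𝒳 × 𝒴 → 𝒳 × 𝒴 → ℝ) (P1 : 𝒳 × 𝒴 → ℝ)
    (WY : 𝒴 → 𝒴 → ℝ) (hNH : ∀ (x' : 𝒳) (y y' : 𝒴), ∑ x : 𝒳, W (x, y) (x', y') = WY y y') :
    ∀ (m : ℕ) (y : Fin (m+1) → 𝒴),
      (∑ xn : Fin (m+1) → 𝒳, chainProb W P1 m fun i => (xn i, y i))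
      = (∑ x, P1 (x, y 0)) * ∏ i : Fin m, WY (y i.succ) (y i.castSucc) := by
  intro m
  induction m with
  | zero =>
    intro y
    rw [← Equiv.sum_comp (Equiv.funUnique (Fin 1) 𝒳).symm]
    simp [chainProb]
  | succ m ih =>
    intro y
    rw [← Equiv.sum_comp (Fin.snocEquiv (fun _ : Fin (m+2) => 𝒳)), Fintype.sum_prod_type,
      Finset.sum_comm]
    have hsnoc : ∀ (a : 𝒳) (w : Fin (m+1) → 𝒳),
        (Fin.snocEquiv (fun _ : Fin (m+2) => 𝒳)) (a, w) = Fin.snoc w a := by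
      intro a w; rfl
    calc ∑ w : Fin (m+1) → 𝒳, ∑ a : 𝒳,
          chainProb W P1 (m+1) (fun i => ((Fin.snocEquiv (fun _ : Fin (m+2) => 𝒳)) (a, w) i, y i))
        = ∑ w : Fin (m+1) → 𝒳,
            chainProb W P1 m (fun i => (w i, y i.castSucc))
              * WY (y (Fin.last (m+1))) (y (Fin.castSucc (Fin.last m))) := by
          refine Finset.sum_congr rfl fun w _ => ?_
          rw [← hNH (w (Fin.last m)) (y (Fin.last (m+1))) (y (Fin.castSucc (Fin.last m))),
            Finset.mul_sum]
          refine Finset.sum_congr rfl fun a _ => ?_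
          rw [hsnoc, chainProb_snoc]
          simp only [Fin.snoc_last, Fin.snoc_castSucc]
      _ = ((∑ x, P1 (x, y 0)) * ∏ i : Fin m, WY (y i.succ.castSucc) (y i.castSucc.castSucc))
            * WY (y (Fin.last (m+1))) (y (Fin.castSucc (Fin.last m))) := by
          rw [← Finset.sum_mul, ih (fun i => y i.castSucc)]
          simp [Fin.succ_castSucc, -Fin.castSucc_succ]
      _ = (∑ x, P1 (x, y 0)) * ∏ i : Fin (m+1), WY (y i.succ) (y i.castSucc) := by
          rw [Fin.prod_univ_castSucc]
          simp [Fin.succ_castSucc, Fin.succ_last, -Fin.castSucc_succ]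
          ring

noncomputable def pathSum {S : Type*} [Fintype S] (M : S → S → ℝ) (q h : S → ℝ) (m : ℕ) : ℝ :=
  ∑ z : Fin (m+1) → S, q (z 0) * (∏ i : Fin m, M (z i.succ) (z i.castSucc)) * h (z (Fin.last m))

lemma pathSum_zero {S : Type*} [Fintype S] (M : S → S → ℝ) (q h : S → ℝ) :
    pathSum M q h 0 = ∑ p : S, q p * h p := by
  unfold pathSum
  rw [← Equiv.sum_comp (Equiv.funUnique (Fin 1) S).symm]
  simp

lemma pathSum_succ {S : Type*} [Fintype S] (M : S → S → ℝ) (q h : S → ℝ) (m : ℕ) :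
    pathSum M q h (m+1) = pathSum M q (fun p' => ∑ a, h a * M a p') m := by
  unfold pathSum
  rw [← Equiv.sum_comp (Fin.snocEquiv (fun _ : Fin (m+2) => S)), Fintype.sum_prod_type,
    Finset.sum_comm]
  refine Finset.sum_congr rfl fun w _ => ?_
  have hsnoc : ∀ a : S, (Fin.snocEquiv (fun _ : Fin (m+2) => S)) (a, w) = Fin.snoc w a :=
    fun a => rfl
  calc ∑ a : S, q ((Fin.snocEquiv (fun _ : Fin (m+2) => S)) (a, w) 0)
        * (∏ i : Fin (m+1), M ((Fin.snocEquiv (fun _ : Fin (m+2) => S)) (a, w) i.succ)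
            ((Fin.snocEquiv (fun _ : Fin (m+2) => S)) (a, w) i.castSucc))
        * h ((Fin.snocEquiv (fun _ : Fin (m+2) => S)) (a, w) (Fin.last (m+1)))
      = ∑ a : S, q (w 0) * (∏ i : Fin m, M (w i.succ) (w i.castSucc))
          * (h a * M a (w (Fin.last m))) := by
        refine Finset.sum_congr rfl fun a _ => ?_
        have h0 : (Fin.snoc w a : Fin (m+2) → S) 0 = w 0 := by
          rw [← Fin.castSucc_zero, Fin.snoc_castSucc]
        rw [hsnoc, Fin.prod_univ_castSucc, h0]
        simp only [Fin.succ_castSucc, Fin.snoc_castSucc, Fin.snoc_last, Fin.succ_last,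
          Fin.castSucc_zero]
        ring
    _ = q (w 0) * (∏ i : Fin m, M (w i.succ) (w i.castSucc))
          * ∑ a : S, h a * M a (w (Fin.last m)) := by
        rw [Finset.mul_sum]

lemma pathSum_le_pathSum {S : Type*} [Fintype S] {M : S → S → ℝ} (hM : ∀ p p', 0 ≤ M p p')
    {q : S → ℝ} (hq : ∀ p, 0 ≤ q p) {h1 h2 : S → ℝ} (hh : ∀ p, h1 p ≤ h2 p) (m : ℕ) :
    pathSum M q h1 m ≤ pathSum M q h2 m := by
  refine Finset.sum_le_sum fun z _ => ?_
  exact mul_le_mul_of_nonneg_left (hh _)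
    (mul_nonneg (hq _) (Finset.prod_nonneg fun i _ => hM _ _))

lemma pathSum_congr_h {S : Type*} [Fintype S] (M : S → S → ℝ) (q : S → ℝ) {h1 h2 : S → ℝ}
    (hh : ∀ p, h1 p = h2 p) (m : ℕ) : pathSum M q h1 m = pathSum M q h2 m := by
  unfold pathSum; exact Finset.sum_congr rfl fun z _ => by rw [hh]

lemma pathSum_smul {S : Type*} [Fintype S] (M : S → S → ℝ) (q h : S → ℝ) (c : ℝ) (m : ℕ) :
    pathSum M q (fun p => c * h p) m = c * pathSum M q h m := by
  unfold pathSum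
  rw [Finset.mul_sum]
  exact Finset.sum_congr rfl fun z _ => by ring

lemma pathSum_eigen {S : Type*} [Fintype S] (M : S → S → ℝ) (q : S → ℝ) (v : S → ℝ)
    (lam : ℝ) (heig : ∀ p', (∑ p, v p * M p p') = lam * v p') (m : ℕ) :
    pathSum M q v m = lam ^ m * ∑ p, q p * v p := by
  induction m with
  | zero => rw [pathSum_zero, pow_zero, one_mul]
  | succ m ih =>
    rw [pathSum_succ, pathSum_congr_h M q (h2 := fun p' => lam * v p') (fun p' => heig p') m,
      pathSum_smul, ih, pow_succ]
    ring

theorem chain_condRenyiDown_rate {𝒳 𝒴 : Type*} [Fintype 𝒳] [Fintype 𝒴]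
    (W : 𝒳 × 𝒴 → 𝒳 × 𝒴 → ℝ) (hW0 : ∀ p p', 0 ≤ W p p')
    (hW1 : ∀ p', ∑ p : 𝒳 × 𝒴, W p p' = 1)
    (WY : 𝒴 → 𝒴 → ℝ)
    (hNH : ∀ (x' : 𝒳) (y y' : 𝒴), ∑ x : 𝒳, W (x, y) (x', y') = WY y y')
    (θ : ℝ) (hθ : θ ∈ Set.Ioo (-1 : ℝ) 0 ∪ Set.Ioi 0)
    (lam : ℝ) (hlam : 0 < lam) (v : 𝒳 × 𝒴 → ℝ) (hv_pos : ∀ p, 0 < v p)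
    (heig : ∀ p' : 𝒳 × 𝒴,
      (∑ p : 𝒳 × 𝒴, v p *
        (if 0 < W p p' then W p p' ^ (1 + θ) * WY p.2 p'.2 ^ (-θ) else 0)) = lam * v p')
    (P1 : 𝒳 × 𝒴 → ℝ) (hP0 : ∀ p, 0 ≤ P1 p) (hP1 : ∑ p : 𝒳 × 𝒴, P1 p = 1) :
    Tendsto (fun m : ℕ => (1 / ((m : ℝ) + 1)) * condRenyiDownChain W P1 θ m)
      atTop (nhds (-(1 / θ) * Real.log lam)) := by
  classical
  set M : 𝒳 × 𝒴 → 𝒳 × 𝒴 → ℝ := fun p p' =>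
    if 0 < W p p' then W p p' ^ (1 + θ) * WY p.2 p'.2 ^ (-θ) else 0 with hM_def
  set q : 𝒳 × 𝒴 → ℝ := fun p =>
    if 0 < P1 p then P1 p ^ (1 + θ) * (∑ x, P1 (x, p.2)) ^ (-θ) else 0 with hq_def
  -- basic positivity facts
  have hM0 : ∀ p p', 0 ≤ M p p' := by
    intro p p'
    simp only [hM_def]
    split
    · exact mul_nonneg (Real.rpow_nonneg (hW0 _ _) _)
        (Real.rpow_nonneg (by
          rw [← hNH p'.1 p.2 p'.2]
          exact Finset.sum_nonneg fun x _ => hW0 _ _) _)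
    · exact le_rfl
  have hq0 : ∀ p, 0 ≤ q p := by
    intro p
    simp only [hq_def]
    split
    · exact mul_nonneg (Real.rpow_nonneg (hP0 _) _)
        (Real.rpow_nonneg (Finset.sum_nonneg fun x _ => hP0 _) _)
    · exact le_rfl
  -- the key term identity
  have hterm : ∀ (m : ℕ) (z : Fin (m+1) → 𝒳 × 𝒴),
      (if 0 < chainProb W P1 m z then
        chainProb W P1 m z ^ (1 + θ) *
          (∑ xn : Fin (m + 1) → 𝒳, chainProb W P1 m fun i => (xn i, (z i).2)) ^ (-θ)
      else 0)
      = q (z 0) * (∏ i : Fin m, M (z i.succ) (z i.castSucc)) * (1 : ℝ) := by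
    intro m z
    rw [mul_one]
    by_cases hc : 0 < chainProb W P1 m z
    · -- positive case
      have hc' : 0 < P1 (z 0) * ∏ i : Fin m, W (z i.succ) (z i.castSucc) := hc
      have hP : 0 < P1 (z 0) := by
        by_contra h
        push_neg at h
        rw [le_antisymm h (hP0 _), zero_mul] at hc'
        exact lt_irrefl 0 hc'
      have hprod : 0 < ∏ i : Fin m, W (z i.succ) (z i.castSucc) := by
        by_contra h
        push_neg at h
        rw [le_antisymm h (Finset.prod_nonneg fun i _ => hW0 _ _), mul_zero] at hc'
        exact lt_irrefl 0 hc'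
      have hWi : ∀ i : Fin m, 0 < W (z i.succ) (z i.castSucc) := by
        intro i
        rcases (hW0 (z i.succ) (z i.castSucc)).lt_or_eq with h | h
        · exact h
        · exfalso
          rw [Finset.prod_eq_zero (Finset.mem_univ i) h.symm] at hprod
          exact lt_irrefl 0 hprod
      have hPY : 0 < ∑ x, P1 (x, (z 0).2) := by
        refine lt_of_lt_of_le hP ?_
        have := Finset.single_le_sum (f := fun x => P1 (x, (z 0).2))
          (fun x _ => hP0 _) (Finset.mem_univ (z 0).1)
        simpa using this
      have hWYi : ∀ i : Fin m, 0 < WY (z i.succ).2 (z i.castSucc).2 := by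
        intro i
        refine lt_of_lt_of_le (hWi i) ?_
        rw [← hNH (z i.castSucc).1 (z i.succ).2 (z i.castSucc).2]
        have := Finset.single_le_sum
          (f := fun x => W (x, (z i.succ).2) ((z i.castSucc).1, (z i.castSucc).2))
          (fun x _ => hW0 _ _) (Finset.mem_univ (z i.succ).1)
        simpa using this
      have hmarg := marginal_fact W P1 WY hNH m (fun i => (z i).2)
      rw [if_pos hc, hmarg]
      have hcp : chainProb W P1 m z = P1 (z 0) * ∏ i : Fin m, W (z i.succ) (z i.castSucc) := rfl
      rw [hcp, Real.mul_rpow hP.le (Finset.prod_nonneg fun i _ => hW0 _ _),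
        Real.mul_rpow hPY.le (Finset.prod_nonneg fun i _ => (hWYi i).le),
        ← Real.finset_prod_rpow _ _ (fun i _ => (hW0 (z i.succ) (z i.castSucc))) (1 + θ),
        ← Real.finset_prod_rpow _ _ (fun i _ => (hWYi i).le) (-θ)]
      have hq' : q (z 0) = P1 (z 0) ^ (1 + θ) * (∑ x, P1 (x, (z 0).2)) ^ (-θ) := by
        simp only [hq_def]; rw [if_pos hP]
      have hM' : ∀ i : Fin m, M (z i.succ) (z i.castSucc)
          = W (z i.succ) (z i.castSucc) ^ (1 + θ) * WY (z i.succ).2 (z i.castSucc).2 ^ (-θ) := by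
        intro i; simp only [hM_def]; rw [if_pos (hWi i)]
      rw [hq', Finset.prod_congr rfl (fun i _ => hM' i), Finset.prod_mul_distrib]
      ring
    · -- zero case
      rw [if_neg hc]
      have h0 : chainProb W P1 m z = 0 :=
        le_antisymm (not_lt.1 hc)
          (mul_nonneg (hP0 _) (Finset.prod_nonneg fun i _ => hW0 _ _))
      have h0' : P1 (z 0) * ∏ i : Fin m, W (z i.succ) (z i.castSucc) = 0 := h0
      rcases mul_eq_zero.1 h0' with h | h
      · have : q (z 0) = 0 := by
          simp only [hq_def]
          rw [if_neg (by rw [h]; exact lt_irrefl 0)]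
        rw [this, zero_mul]
      · obtain ⟨i, _, hi⟩ := Finset.prod_eq_zero_iff.1 h
        have : M (z i.succ) (z i.castSucc) = 0 := by
          simp only [hM_def]
          rw [if_neg (by rw [hi]; exact lt_irrefl 0)]
        rw [Finset.prod_eq_zero (Finset.mem_univ i) this, mul_zero]
  -- the sum equals a path sum
  have hS : ∀ m : ℕ,
      (∑ z : Fin (m + 1) → 𝒳 × 𝒴,
        if 0 < chainProb W P1 m z then
          chainProb W P1 m z ^ (1 + θ) *
            (∑ xn : Fin (m + 1) → 𝒳, chainProb W P1 m fun i => (xn i, (z i).2)) ^ (-θ)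
        else 0)
      = pathSum M q (fun _ => (1 : ℝ)) m := by
    intro m
    exact Finset.sum_congr rfl fun z _ => hterm m z
  -- positivity of the constant c
  have hne : Nonempty (𝒳 × 𝒴) := by
    by_contra h
    rw [not_nonempty_iff] at h
    rw [Finset.univ_eq_empty, Finset.sum_empty] at hP1
    exact one_ne_zero hP1.symm
  obtain ⟨p₀, hp₀⟩ : ∃ p, 0 < P1 p := by
    by_contra h
    push_neg at h
    rw [Finset.sum_eq_zero (fun p _ => le_antisymm (h p) (hP0 p))] at hP1
    exact one_ne_zero hP1.symm
  set c : ℝ := ∑ p, q p * v p with hc_def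
  have hc_pos : 0 < c := by
    refine Finset.sum_pos' (fun p _ => mul_nonneg (hq0 p) (hv_pos p).le)
      ⟨p₀, Finset.mem_univ p₀, ?_⟩
    have hqp : 0 < q p₀ := by
      simp only [hq_def]
      rw [if_pos hp₀]
      have hPY : 0 < ∑ x, P1 (x, p₀.2) := by
        refine lt_of_lt_of_le hp₀ ?_
        have := Finset.single_le_sum (f := fun x => P1 (x, p₀.2))
          (fun x _ => hP0 _) (Finset.mem_univ p₀.1)
        simpa using this
      exact mul_pos (Real.rpow_pos_of_pos hp₀ _) (Real.rpow_pos_of_pos hPY _)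
    exact mul_pos hqp (hv_pos p₀)
  -- min and max of v
  obtain ⟨p₁, _, hp₁⟩ := Finset.exists_min_image Finset.univ v Finset.univ_nonempty
  obtain ⟨p₂, _, hp₂⟩ := Finset.exists_max_image Finset.univ v Finset.univ_nonempty
  set a : ℝ := (v p₂)⁻¹ with ha_def
  set b : ℝ := (v p₁)⁻¹ with hb_def
  have ha_pos : 0 < a := inv_pos.2 (hv_pos p₂)
  have hb_pos : 0 < b := inv_pos.2 (hv_pos p₁)
  have hav : ∀ p, a * v p ≤ 1 := by
    intro p
    rw [← inv_mul_cancel₀ (hv_pos p₂).ne']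
    exact mul_le_mul_of_nonneg_left (hp₂ p (Finset.mem_univ p)) ha_pos.le
  have hbv : ∀ p, 1 ≤ b * v p := by
    intro p
    rw [← inv_mul_cancel₀ (hv_pos p₁).ne']
    exact mul_le_mul_of_nonneg_left (hp₁ p (Finset.mem_univ p)) hb_pos.le
  -- eigen computation
  have heigen : ∀ m : ℕ, pathSum M q v m = lam ^ m * c :=
    pathSum_eigen M q v lam heig
  -- bounds on the path sum
  have hlow : ∀ m : ℕ, a * (lam ^ m * c) ≤ pathSum M q (fun _ => (1:ℝ)) m := by
    intro m
    calc a * (lam ^ m * c) = a * pathSum M q v m := by rw [heigen]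
      _ = pathSum M q (fun p => a * v p) m := (pathSum_smul M q v a m).symm
      _ ≤ pathSum M q (fun _ => (1:ℝ)) m := pathSum_le_pathSum hM0 hq0 hav m
  have hhigh : ∀ m : ℕ, pathSum M q (fun _ => (1:ℝ)) m ≤ b * (lam ^ m * c) := by
    intro m
    calc pathSum M q (fun _ => (1:ℝ)) m ≤ pathSum M q (fun p => b * v p) m :=
          pathSum_le_pathSum hM0 hq0 hbv m
      _ = b * pathSum M q v m := pathSum_smul M q v b m
      _ = b * (lam ^ m * c) := by rw [heigen]
  have hSpos : ∀ m : ℕ, 0 < pathSum M q (fun _ => (1:ℝ)) m := fun m =>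
    lt_of_lt_of_le (by positivity) (hlow m)
  -- logarithmic bounds
  have hloglow : ∀ m : ℕ,
      Real.log (a * c) + m * Real.log lam ≤ Real.log (pathSum M q (fun _ => (1:ℝ)) m) := by
    intro m
    have : Real.log (a * (lam ^ m * c)) = Real.log (a * c) + m * Real.log lam := by
      rw [Real.log_mul ha_pos.ne' (by positivity), Real.log_mul (by positivity) hc_pos.ne',
        Real.log_mul ha_pos.ne' hc_pos.ne', Real.log_pow]
      push_cast
      ring
    rw [← this]
    exact Real.log_le_log (by positivity) (hlow m)
  have hloghigh : ∀ m : ℕ,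
      Real.log (pathSum M q (fun _ => (1:ℝ)) m) ≤ Real.log (b * c) + m * Real.log lam := by
    intro m
    have : Real.log (b * (lam ^ m * c)) = Real.log (b * c) + m * Real.log lam := by
      rw [Real.log_mul hb_pos.ne' (by positivity), Real.log_mul (by positivity) hc_pos.ne',
        Real.log_mul hb_pos.ne' hc_pos.ne', Real.log_pow]
      push_cast
      ring
    rw [← this]
    exact Real.log_le_log (hSpos m) (hhigh m)
  -- the normalized log tends to log lam
  have hbase : Tendsto (fun m : ℕ => 1 / ((m : ℝ) + 1)) atTop (nhds 0) :=
    tendsto_one_div_add_atTop_nhds_zero_nat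
  have haux : ∀ C : ℝ, Tendsto
      (fun m : ℕ => (1 / ((m : ℝ) + 1)) * (C + m * Real.log lam)) atTop (nhds (Real.log lam)) := by
    intro C
    have h1 : Tendsto (fun m : ℕ => (C - Real.log lam) * (1 / ((m : ℝ) + 1)) + Real.log lam)
        atTop (nhds ((C - Real.log lam) * 0 + Real.log lam)) :=
      ((hbase.const_mul _).add_const _)
    rw [mul_zero, zero_add] at h1
    refine h1.congr fun m => ?_
    have hm : ((m : ℝ) + 1) ≠ 0 := by positivity
    field_simp
    ring
  have hlog : Tendsto (fun m : ℕ => (1 / ((m : ℝ) + 1))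
      * Real.log (pathSum M q (fun _ => (1:ℝ)) m)) atTop (nhds (Real.log lam)) := by
    refine tendsto_of_tendsto_of_tendsto_of_le_of_le
      (haux (Real.log (a * c))) (haux (Real.log (b * c))) (fun m => ?_) (fun m => ?_)
    · exact mul_le_mul_of_nonneg_left (hloglow m) (by positivity)
    · exact mul_le_mul_of_nonneg_left (hloghigh m) (by positivity)
  have hfinal := hlog.const_mul (-(1 / θ))
  refine hfinal.congr fun m => ?_
  rw [condRenyiDownChain, hS m]
  ring
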